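/- Let γ > 0 and let p and q be probability densities on ℝ^k with ∫p^{1+γ}, ∫q^{1+γ}, ∫p q^γ finite and ∫p^{1+γ} > 0, ∫q^{1+γ} > 0. If S_sphere(p,q) = S_sphere(p,p), then p = q almost everywhere. That is, the pseudo-spherical score is strictly proper on the set of probability densities. -/

import Mathlib

open MeasureTheory

private lemma g_pos_aux {γ t : ℝ} (hγ : 0 < γ) (ht : 0 ≤ t) (hne : t ≠ 1) :
    0 < t ^ (1 + γ) - (1 + γ) * t + γ := by
  set g : ℝ → ℝ := fun t => t ^ (1 + γ) - (1 + γ) * t + γ with hg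
  have hderiv : ∀ x : ℝ, HasDerivAt g ((1 + γ) * x ^ γ - (1 + γ)) x := by
    intro x
    have h1 : HasDerivAt (fun x : ℝ => x ^ (1 + γ)) ((1 + γ) * x ^ ((1 + γ) - 1)) x :=
      Real.hasDerivAt_rpow_const (Or.inr (by linarith))
    have h2 : (1 + γ) - 1 = γ := by ring
    rw [h2] at h1
    simpa [hg] using (h1.sub ((hasDerivAt_id x).const_mul (1 + γ))).add_const γ
  have hcont : Continuous g := by
    apply continuous_iff_continuousAt.2
    intro x
    exact (hderiv x).continuousAt
  have hderiv' : ∀ x : ℝ, deriv g x = (1 + γ) * x ^ γ - (1 + γ) := fun x => (hderiv x).deriv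
  have hg1 : g 1 = 0 := by
    show (1:ℝ) ^ (1 + γ) - (1 + γ) * 1 + γ = 0
    rw [Real.one_rpow]; ring
  rcases lt_or_gt_of_ne hne with hlt | hgt
  · -- t < 1 : g strictly decreasing on [0,1]
    have hanti : StrictAntiOn g (Set.Icc (0:ℝ) 1) := by
      apply strictAntiOn_of_deriv_neg (convex_Icc 0 1) hcont.continuousOn
      intro x hx
      rw [interior_Icc] at hx
      rw [hderiv']
      have : x ^ γ < 1 := Real.rpow_lt_one hx.1.le hx.2 hγ
      nlinarith
    have := hanti ⟨ht, hlt.le⟩ ⟨zero_le_one, le_refl 1⟩ hlt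
    rw [hg1] at this
    simpa [hg] using this
  · -- t > 1 : g strictly increasing on [1,∞)
    have hmono : StrictMonoOn g (Set.Ici (1:ℝ)) := by
      apply strictMonoOn_of_deriv_pos (convex_Ici 1) hcont.continuousOn
      intro x hx
      rw [interior_Ici] at hx
      rw [hderiv']
      have hx' : 1 < x := hx
      have : 1 < x ^ γ := by
        rw [Real.one_lt_rpow_iff_of_pos (by linarith : (0:ℝ) < x)]
        exact Or.inl ⟨hx', hγ⟩
      nlinarith
    have := hmono (Set.self_mem_Ici) (Set.mem_Ici.2 hgt.le) hgt
    rw [hg1] at this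
    simpa [hg] using this

private lemma young_ineq_aux {γ u v : ℝ} (hγ : 0 < γ) (hu : 0 ≤ u) (hv : 0 ≤ v) :
    u * v ^ γ ≤ u ^ (1 + γ) / (1 + γ) + γ * v ^ (1 + γ) / (1 + γ) := by
  have hpq : (1 + γ).HolderConjugate ((1 + γ) / γ) := by
    rw [Real.holderConjugate_iff_eq_conjExponent (by linarith), add_sub_cancel_left]
  have h := Real.young_inequality_of_nonneg hu (Real.rpow_nonneg hv γ) hpq
  have h1 : (v ^ γ) ^ ((1 + γ) / γ) = v ^ (1 + γ) := by
    rw [← Real.rpow_mul hv]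
    congr 1
    field_simp
  rw [h1] at h
  have h2 : v ^ (1 + γ) / ((1 + γ) / γ) = γ * v ^ (1 + γ) / (1 + γ) := by
    rw [div_div_eq_mul_div]
    ring
  rw [h2] at h
  exact h

private lemma young_eq_aux {γ u v : ℝ} (hγ : 0 < γ) (hu : 0 ≤ u) (hv : 0 ≤ v)
    (h : u ^ (1 + γ) / (1 + γ) + γ * v ^ (1 + γ) / (1 + γ) - u * v ^ γ = 0) : u = v := by
  rcases eq_or_lt_of_le hv with hv0 | hvpos
  · -- v = 0
    rw [← hv0] at h ⊢
    rw [Real.zero_rpow (by positivity : (1 : ℝ) + γ ≠ 0), Real.zero_rpow hγ.ne'] at h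
    have h1γ : (0:ℝ) < 1 + γ := by linarith
    have hzero : u ^ (1 + γ) = 0 := by
      have h2 : u ^ (1 + γ) / (1 + γ) = 0 := by
        have h3 : γ * 0 / (1 + γ) = 0 := by ring
        have h4 : u * (0:ℝ) = 0 := by ring
        linarith [h, h3.ge, h4.le]
      have := (div_eq_zero_iff.1 h2)
      rcases this with h' | h'
      · exact h'
      · linarith
    rw [Real.rpow_eq_zero_iff_of_nonneg hu] at hzero
    exact hzero.1
  · set t := u / v with htdef
    have ht : 0 ≤ t := div_nonneg hu hvpos.le
    have huv : u = t * v := by rw [htdef, div_mul_cancel₀ _ hvpos.ne']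
    have hvp : (0:ℝ) < v ^ (1 + γ) := Real.rpow_pos_of_pos hvpos _
    have hvv : v ^ (1 + γ) = v * v ^ γ := by
      rw [Real.rpow_add' hvpos.le (by positivity), Real.rpow_one]
    have h' : v ^ (1 + γ) * (t ^ (1 + γ) / (1 + γ) + γ / (1 + γ) - t) = 0 := by
      rw [huv, Real.mul_rpow ht hvpos.le] at h
      calc v ^ (1 + γ) * (t ^ (1 + γ) / (1 + γ) + γ / (1 + γ) - t)
          = t ^ (1 + γ) * v ^ (1 + γ) / (1 + γ) + γ * v ^ (1 + γ) / (1 + γ)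
            - t * v * v ^ γ := by rw [hvv]; ring
        _ = 0 := h
    have ht0 : t ^ (1 + γ) / (1 + γ) + γ / (1 + γ) - t = 0 := by
      rcases mul_eq_zero.1 h' with h'' | h''
      · exact absurd h'' hvp.ne'
      · exact h''
    have hgt : t ^ (1 + γ) - (1 + γ) * t + γ = 0 := by
      have h1γ : (1:ℝ) + γ ≠ 0 := by positivity
      field_simp at ht0
      linarith
    by_contra hne
    have ht1 : t ≠ 1 := by
      intro h1
      apply hne
      rw [huv, h1, one_mul]
    exact absurd hgt (g_pos_aux hγ ht ht1).ne'

/-- The pseudo-spherical score is strictly proper on probability densities: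
for probability densities `p, q` on `ℝ^k`, if `S_sphere(p,q) = S_sphere(p,p)` then
`p = q` almost everywhere. -/
theorem pseudo_spherical_score_strictly_proper_on_densities
    {k : ℕ} (γ : ℝ) (hγ : 0 < γ)
    (p q : (Fin k → ℝ) → ℝ)
    (hpm : Measurable p) (hqm : Measurable q)
    (hp0 : ∀ x, 0 ≤ p x) (hq0 : ∀ x, 0 ≤ q x)
    (hpi : Integrable p) (hqi : Integrable q)
    (hp1 : (∫ x, p x) = 1) (hq1 : (∫ x, q x) = 1)
    (hpint : Integrable (fun x => p x ^ (1 + γ)))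
    (hqint : Integrable (fun x => q x ^ (1 + γ)))
    (hpqint : Integrable (fun x => p x * q x ^ γ))
    (hppos : 0 < ∫ x, p x ^ (1 + γ))
    (hqpos : 0 < ∫ x, q x ^ (1 + γ))
    (heq : -(∫ x, p x * q x ^ γ) / (∫ x, q x ^ (1 + γ)) ^ (γ / (1 + γ)) =
        -(∫ x, p x * p x ^ γ) / (∫ x, p x ^ (1 + γ)) ^ (γ / (1 + γ))) :
    p =ᵐ[volume] q := by
  have h1γ : (0:ℝ) < 1 + γ := by linarith
  set A := ∫ x, p x ^ (1 + γ) with hA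
  set B := ∫ x, q x ^ (1 + γ) with hB
  set I := ∫ x, p x * q x ^ γ with hIdef
  -- Step 1: rewrite ∫ p * p^γ as A
  have hid : (fun x => p x * p x ^ γ) = fun x => p x ^ (1 + γ) := by
    funext x
    rw [Real.rpow_add' (hp0 x) h1γ.ne', Real.rpow_one]
  rw [hid] at heq
  -- Step 2: I = A^(1/(1+γ)) * B^(γ/(1+γ))
  have hBe : (0:ℝ) < B ^ (γ / (1 + γ)) := Real.rpow_pos_of_pos hqpos _
  have hAe : (0:ℝ) < A ^ (γ / (1 + γ)) := Real.rpow_pos_of_pos hppos _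
  have h5 : A / A ^ (γ / (1 + γ)) = A ^ (1 / (1 + γ)) := by
    have he : 1 - γ / (1 + γ) = 1 / (1 + γ) := by field_simp; ring
    rw [← he, Real.rpow_sub hppos, Real.rpow_one]
  have h6 : I / B ^ (γ / (1 + γ)) = A ^ (1 / (1 + γ)) := by
    rw [← h5]
    have := heq
    rw [neg_div, neg_div, neg_inj] at this
    exact this
  have hI : I = A ^ (1 / (1 + γ)) * B ^ (γ / (1 + γ)) := by
    rw [← h6, div_mul_cancel₀ _ hBe.ne']
  -- Step 3: normalizing constants
  set a := A ^ (1 / (1 + γ)) with ha_def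
  set b := B ^ (1 / (1 + γ)) with hb_def
  have ha : (0:ℝ) < a := Real.rpow_pos_of_pos hppos _
  have hb : (0:ℝ) < b := Real.rpow_pos_of_pos hqpos _
  have haA : a ^ (1 + γ) = A := by
    rw [ha_def, ← Real.rpow_mul hppos.le,
      show (1 / (1 + γ)) * (1 + γ) = 1 by field_simp, Real.rpow_one]
  have hbB : b ^ (1 + γ) = B := by
    rw [hb_def, ← Real.rpow_mul hqpos.le,
      show (1 / (1 + γ)) * (1 + γ) = 1 by field_simp, Real.rpow_one]
  have hbγ : b ^ γ = B ^ (γ / (1 + γ)) := by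
    rw [hb_def, ← Real.rpow_mul hqpos.le, show (1 / (1 + γ)) * γ = γ / (1 + γ) by ring]
  have hIab : I = a * b ^ γ := by rw [hI, hbγ]
  have hIpos : (0:ℝ) < I := by rw [hIab]; positivity
  -- representation of the defect function
  have hFrepr : ∀ x, p x ^ (1 + γ) / ((1 + γ) * A) + γ * q x ^ (1 + γ) / ((1 + γ) * B)
      - p x * q x ^ γ / I
      = (p x / a) ^ (1 + γ) / (1 + γ) + γ * (q x / b) ^ (1 + γ) / (1 + γ)
        - (p x / a) * (q x / b) ^ γ := by
    intro x
    rw [Real.div_rpow (hp0 x) ha.le, Real.div_rpow (hq0 x) hb.le,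
      Real.div_rpow (hq0 x) hb.le, haA, hbB, hIab]
    field_simp
  have hFnn : ∀ x, 0 ≤ p x ^ (1 + γ) / ((1 + γ) * A) + γ * q x ^ (1 + γ) / ((1 + γ) * B)
      - p x * q x ^ γ / I := by
    intro x
    rw [hFrepr x, sub_nonneg]
    exact young_ineq_aux hγ (div_nonneg (hp0 x) ha.le) (div_nonneg (hq0 x) hb.le)
  have hFint : Integrable (fun x => p x ^ (1 + γ) / ((1 + γ) * A)
      + γ * q x ^ (1 + γ) / ((1 + γ) * B) - p x * q x ^ γ / I) :=
    ((hpint.div_const _).add ((hqint.const_mul γ).div_const _)).sub (hpqint.div_const _)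
  have hFzero : (∫ x, (p x ^ (1 + γ) / ((1 + γ) * A)
      + γ * q x ^ (1 + γ) / ((1 + γ) * B) - p x * q x ^ γ / I)) = 0 := by
    have i1 : Integrable (fun x => p x ^ (1 + γ) / ((1 + γ) * A)) (volume : Measure (Fin k → ℝ)) :=
      hpint.div_const _
    have i2 : Integrable (fun x => γ * q x ^ (1 + γ) / ((1 + γ) * B))
        (volume : Measure (Fin k → ℝ)) := (hqint.const_mul γ).div_const _
    have i3 : Integrable (fun x => p x * q x ^ γ / I) (volume : Measure (Fin k → ℝ)) :=
      hpqint.div_const _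
    have i12 : Integrable (fun x => p x ^ (1 + γ) / ((1 + γ) * A)
        + γ * q x ^ (1 + γ) / ((1 + γ) * B)) (volume : Measure (Fin k → ℝ)) := i1.add i2
    rw [integral_sub i12 i3, integral_add i1 i2,
      integral_div, integral_div, integral_div, integral_const_mul]
    rw [← hA, ← hB, ← hIdef]
    field_simp
    ring
  have key : (fun x => p x ^ (1 + γ) / ((1 + γ) * A)
      + γ * q x ^ (1 + γ) / ((1 + γ) * B) - p x * q x ^ γ / I) =ᵐ[volume] 0 := by
    rw [← integral_eq_zero_iff_of_nonneg hFnn hFint]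
    exact hFzero
  have hae : ∀ᵐ x ∂(volume : Measure (Fin k → ℝ)), p x / a = q x / b := by
    filter_upwards [key] with x hx
    simp only [Pi.zero_apply] at hx
    rw [hFrepr x] at hx
    exact young_eq_aux hγ (div_nonneg (hp0 x) ha.le) (div_nonneg (hq0 x) hb.le)
      (by linarith)
  -- integrate to get a = b
  have hpq' : ∀ᵐ x ∂(volume : Measure (Fin k → ℝ)), p x = (a / b) * q x := by
    filter_upwards [hae] with x hx
    field_simp at hx ⊢
    linarith [hx]
  have hint_eq : (1:ℝ) = (a / b) * 1 := by
    calc (1:ℝ) = ∫ x, p x := hp1.symm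
      _ = ∫ x, (a / b) * q x := integral_congr_ae hpq'
      _ = (a / b) * ∫ x, q x := integral_const_mul _ _
      _ = (a / b) * 1 := by rw [hq1]
  have hab : a = b := by
    have : a / b = 1 := by linarith
    field_simp at this
    exact this
  have hbne : b ≠ 0 := hb.ne'
  filter_upwards [hae] with x hx
  rw [hab] at hx
  field_simp [hbne] at hx
  exact hx
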